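/- Let Γ be a Fuchsian group containing the translation z ↦ z + λ, and set t_0 = (1/2) min{|c(g)| : g ∈ Γ, c(g) ≠ 0}. If 0 < t < t_0, then the horoballs F_t(g(∞)), for distinct points g(∞) with g ∈ Γ, are pairwise disjoint. -/

import Mathlib

open Complex

lemma halfplane_ball_disjoint (t c a : ℝ) (ht : 0 < t) (hc : 2 * t < |c|) :
    Disjoint {z : ℂ | 1 / (2 * t) < z.im}
      (Metric.ball ((a : ℂ) + (t / c ^ 2 : ℝ) * I) (t / c ^ 2)) := by
  rw [Set.disjoint_left]
  intro z hz hzb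
  have hc2 : 4 * t ^ 2 < c ^ 2 := by nlinarith [_root_.sq_abs c, abs_nonneg c]
  rw [Metric.mem_ball, Complex.dist_eq] at hzb
  have him : (z - ((a : ℂ) + (t / c ^ 2 : ℝ) * I)).im = z.im - t / c ^ 2 := by
    simp [-Complex.ofReal_div]
  have h1 : |z.im - t / c ^ 2| ≤ ‖z - ((a : ℂ) + (t / c ^ 2 : ℝ) * I)‖ := by
    rw [← him]; exact Complex.abs_im_le_norm _
  have h2 : z.im - t / c ^ 2 < t / c ^ 2 := (le_abs_self _).trans_lt (h1.trans_lt hzb)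
  have hz' : 1 / (2 * t) < z.im := hz
  have hcpos : 0 < c ^ 2 := by nlinarith
  rw [div_lt_iff₀ (by positivity)] at hz'
  rw [sub_lt_iff_lt_add, ← add_div, lt_div_iff₀ hcpos] at h2
  nlinarith

lemma balls_disjoint (t a₁ c₁ a₂ c₂ : ℝ) (ht : 0 < t) (hc₁ : c₁ ≠ 0) (hc₂ : c₂ ≠ 0)
    (hD : 2 * t < |a₁ * c₂ - a₂ * c₁|) :
    Disjoint (Metric.ball ((a₁ / c₁ : ℝ) + (t / c₁ ^ 2 : ℝ) * I) (t / c₁ ^ 2))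
      (Metric.ball ((a₂ / c₂ : ℝ) + (t / c₂ ^ 2 : ℝ) * I) (t / c₂ ^ 2)) := by
  set D := a₁ * c₂ - a₂ * c₁ with hDdef
  apply Metric.ball_disjoint_ball
  rw [Complex.dist_eq]
  set w : ℂ := ((a₁ / c₁ : ℝ) + (t / c₁ ^ 2 : ℝ) * I) - ((a₂ / c₂ : ℝ) + (t / c₂ ^ 2 : ℝ) * I)
    with hw
  have hre : w.re = a₁ / c₁ - a₂ / c₂ := by simp [hw, -Complex.ofReal_div]
  have him : w.im = t / c₁ ^ 2 - t / c₂ ^ 2 := by simp [hw, -Complex.ofReal_div]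
  have hD2 : 4 * t ^ 2 < D ^ 2 := by nlinarith [_root_.sq_abs D, abs_nonneg D]
  have hden : (0:ℝ) < (c₁ * c₂) ^ 2 := by
    rw [← _root_.sq_abs (c₁ * c₂)]
    exact pow_pos (abs_pos.mpr (mul_ne_zero hc₁ hc₂)) 2
  have hsq : (t / c₁ ^ 2 + t / c₂ ^ 2) ^ 2 ≤ ‖w‖ ^ 2 := by
    rw [Complex.sq_norm, Complex.normSq_apply, hre, him]
    have e : a₁ / c₁ - a₂ / c₂ = D / (c₁ * c₂) := by field_simp; ring
    rw [e]
    have key : (t / c₁ ^ 2 + t / c₂ ^ 2) ^ 2 - (t / c₁ ^ 2 - t / c₂ ^ 2) ^ 2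
        = (2 * t) ^ 2 / (c₁ * c₂) ^ 2 := by field_simp; ring
    have h4 : (2 * t) ^ 2 / (c₁ * c₂) ^ 2 ≤ D ^ 2 / (c₁ * c₂) ^ 2 := by
      rw [div_le_div_iff₀ hden hden]; nlinarith
    have hDD : D / (c₁ * c₂) * (D / (c₁ * c₂)) = D ^ 2 / (c₁ * c₂) ^ 2 := by ring
    nlinarith [key, h4, hDD]
  have habs : 0 ≤ ‖w‖ := norm_nonneg w
  have hsum : 0 ≤ t / c₁ ^ 2 + t / c₂ ^ 2 := by positivity
  nlinarith


/-- The horoball `F_t(g(∞))`. -/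
noncomputable def horoball (m : Matrix (Fin 2) (Fin 2) ℝ) (t : ℝ) : Set ℂ :=
  if m 1 0 = 0 then {z : ℂ | 1 / (2 * t) < z.im}
  else Metric.ball ((m 0 0 / m 1 0 : ℝ) + (t / (m 1 0) ^ 2 : ℝ) * I) (t / (m 1 0) ^ 2)

/-- The point `g(∞)` on the boundary `ℝ ∪ {∞}`: `none` means `∞`. -/
noncomputable def cuspPt (m : Matrix (Fin 2) (Fin 2) ℝ) : Option ℝ :=
  if m 1 0 = 0 then none else some (m 0 0 / m 1 0)

/-- Let `Γ ≤ SL(2,ℝ)` contain the translation `z ↦ z + λ`, `λ > 0`, and set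
`t₀ = (1/2) min {|c(g)| : g ∈ Γ, c(g) ≠ 0}` (the minimum being attained and positive).
If `0 < t < t₀`, then the horoballs `F_t(g(∞))` at distinct points `g(∞)`, `g ∈ Γ`,
are pairwise disjoint. -/
theorem horoballs_disjoint (Γ : Subgroup (Matrix.SpecialLinearGroup (Fin 2) ℝ))
    (lam : ℝ) (hlam : 0 < lam)
    (U : Matrix.SpecialLinearGroup (Fin 2) ℝ)
    (hU : (U : Matrix (Fin 2) (Fin 2) ℝ) = !![1, lam; 0, 1]) (hUΓ : U ∈ Γ)
    (t₀ : ℝ)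
    (ht₀ : t₀ = (1 / 2) * sInf {r : ℝ | ∃ g ∈ Γ,
        (g : Matrix (Fin 2) (Fin 2) ℝ) 1 0 ≠ 0 ∧ r = |(g : Matrix (Fin 2) (Fin 2) ℝ) 1 0|})
    (ht₀pos : 0 < t₀)
    (hmin : ∃ g ∈ Γ, (g : Matrix (Fin 2) (Fin 2) ℝ) 1 0 ≠ 0 ∧
        |(g : Matrix (Fin 2) (Fin 2) ℝ) 1 0| = 2 * t₀)
    (t : ℝ) (ht : 0 < t) (htt₀ : t < t₀)
    (g h : Matrix.SpecialLinearGroup (Fin 2) ℝ) (hg : g ∈ Γ) (hh : h ∈ Γ)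
    (hne : cuspPt (g : Matrix (Fin 2) (Fin 2) ℝ) ≠ cuspPt (h : Matrix (Fin 2) (Fin 2) ℝ)) :
    Disjoint (horoball (g : Matrix (Fin 2) (Fin 2) ℝ) t)
      (horoball (h : Matrix (Fin 2) (Fin 2) ℝ) t) := by
  set a₁ := (g : Matrix (Fin 2) (Fin 2) ℝ) 0 0 with ha₁
  set c₁ := (g : Matrix (Fin 2) (Fin 2) ℝ) 1 0 with hc₁
  set a₂ := (h : Matrix (Fin 2) (Fin 2) ℝ) 0 0 with ha₂
  set c₂ := (h : Matrix (Fin 2) (Fin 2) ℝ) 1 0 with hc₂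
  have key : ∀ k : Matrix.SpecialLinearGroup (Fin 2) ℝ, k ∈ Γ →
      (k : Matrix (Fin 2) (Fin 2) ℝ) 1 0 ≠ 0 →
      2 * t₀ ≤ |(k : Matrix (Fin 2) (Fin 2) ℝ) 1 0| := by
    intro k hk hck
    have hmem : |(k : Matrix (Fin 2) (Fin 2) ℝ) 1 0| ∈ {r : ℝ | ∃ g ∈ Γ,
        (g : Matrix (Fin 2) (Fin 2) ℝ) 1 0 ≠ 0 ∧ r = |(g : Matrix (Fin 2) (Fin 2) ℝ) 1 0|} :=
      ⟨k, hk, hck, rfl⟩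
    have hbdd : BddBelow {r : ℝ | ∃ g ∈ Γ,
        (g : Matrix (Fin 2) (Fin 2) ℝ) 1 0 ≠ 0 ∧ r = |(g : Matrix (Fin 2) (Fin 2) ℝ) 1 0|} :=
      ⟨0, by rintro r ⟨g', _, _, rfl⟩; positivity⟩
    have hle := csInf_le hbdd hmem
    rw [ht₀]; linarith
  by_cases hcg : c₁ = 0 <;> by_cases hch : c₂ = 0
  · exact absurd (by simp [cuspPt, ← hc₁, ← hc₂, hcg, hch]) hne
  · rw [horoball, horoball, if_pos hcg, if_neg hch]
    exact halfplane_ball_disjoint t c₂ (a₂ / c₂) ht (by linarith [key h hh hch])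
  · rw [horoball, horoball, if_neg hcg, if_pos hch]
    exact (halfplane_ball_disjoint t c₁ (a₁ / c₁) ht (by linarith [key g hg hcg])).symm
  · rw [horoball, horoball, if_neg hcg, if_neg hch]
    have hck : ((g⁻¹ * h : Matrix.SpecialLinearGroup (Fin 2) ℝ) :
        Matrix (Fin 2) (Fin 2) ℝ) 1 0 = a₁ * c₂ - a₂ * c₁ := by
      rw [Matrix.SpecialLinearGroup.coe_mul, Matrix.SpecialLinearGroup.coe_inv,
        Matrix.adjugate_fin_two]
      simp [Matrix.mul_apply, Fin.sum_univ_two, ← hc₁, ← ha₁]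
      ring
    have hDne : a₁ * c₂ - a₂ * c₁ ≠ 0 := by
      intro hD0
      apply hne
      have : a₁ / c₁ = a₂ / c₂ := by
        rw [div_eq_div_iff hcg hch]; linarith
      simp [cuspPt, ← hc₁, ← hc₂, ← ha₁, ← ha₂, hcg, hch, this]
    have hDlb := key (g⁻¹ * h) (mul_mem (inv_mem hg) hh) (by rw [hck]; exact hDne)
    rw [hck] at hDlb
    exact balls_disjoint t a₁ c₁ a₂ c₂ ht hcg hch (by linarith)
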